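/- Let A be a good s-balancer on the balancing graph G⁺ of a finite connected d-regular graph G, let c ∈ ℕ, and let t ≤ t' be two time steps. Let U ⊆ V be a set of nodes such that every u ∈ U satisfies x_t(u) < c·d⁺ + s and there exists a time step t_u ∈ [t, t'] with x_{t_u}(u) ≥ c·d⁺ + s. Then φ'_{t'}(c) ≤ φ'_t(c) − Σ_{u∈U} min{s, c·d⁺ + s − x_t(u)}. -/

import Mathlib

open Finset

/-- A `d`-regular connected symmetric graph `G` together with `dSelf` self-loops
attached to every node (the balancing graph `G⁺`). -/
structure LBSetup (V : Type) [Fintype V] [DecidableEq V] where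
  d : ℕ
  dSelf : ℕ
  Adj : V → V → Bool
  symm : ∀ u v : V, Adj u v → Adj v u
  loopless : ∀ u : V, ¬ Adj u u
  regular : ∀ u : V, (Finset.univ.filter fun v => Adj u v).card = d
  connected : ∀ u v : V, Relation.ReflTransGen (fun a b => Adj a b = true) u v

variable {V : Type} [Fintype V] [DecidableEq V]

/-- Degree `d⁺ = d + d°` of the balancing graph. -/
def LBSetup.dPlus (S : LBSetup V) : ℕ := S.d + S.dSelf

/-- Neighbours of `u` in the original graph. -/
def LBSetup.nbrs (S : LBSetup V) (u : V) : Finset V :=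
  Finset.univ.filter fun v => S.Adj u v

/-- A load-balancing algorithm on the balancing graph `G⁺`: integer flows on
original edges (`f`) and on self-loops (`g`), and load vectors `x`, satisfying
the conservation laws. Time steps start at `t = 1`. -/
structure LBAlgo (S : LBSetup V) where
  f : ℕ → V → V → ℕ
  g : ℕ → V → Fin S.dSelf → ℕ
  x : ℕ → V → ℕ
  flow_out : ∀ t, 1 ≤ t → ∀ u : V,
    x t u = (∑ v ∈ S.nbrs u, f t u v) + ∑ i : Fin S.dSelf, g t u i
  flow_in : ∀ t, 1 ≤ t → ∀ u : V,
    x (t + 1) u = (∑ v ∈ S.nbrs u, f t v u) + ∑ i : Fin S.dSelf, g t u i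

/-- Cumulative flow on the original edge `(u, v)` up to time `t`. -/
def LBAlgo.F {S : LBSetup V} (A : LBAlgo S) (t : ℕ) (u v : V) : ℕ :=
  ∑ τ ∈ Finset.Icc 1 t, A.f τ u v

/-- Cumulative flow on the `i`-th self-loop of `u` up to time `t`. -/
def LBAlgo.Gcum {S : LBSetup V} (A : LBAlgo S) (t : ℕ) (u : V) (i : Fin S.dSelf) : ℕ :=
  ∑ τ ∈ Finset.Icc 1 t, A.g τ u i

/-- Cumulative δ-fairness: every edge (original or self-loop) of `u` carries at least
`⌊x_t(u)/d⁺⌋` tokens in every step, and cumulative flows on any two original edges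
of `u` differ by at most `δ`. -/
def CumFair (S : LBSetup V) (A : LBAlgo S) (δ : ℝ) : Prop :=
  (∀ t, 1 ≤ t → ∀ u : V,
      (∀ v : V, S.Adj u v → A.x t u / S.dPlus ≤ A.f t u v) ∧
      (∀ i : Fin S.dSelf, A.x t u / S.dPlus ≤ A.g t u i)) ∧
  (∀ t : ℕ, ∀ u v w : V, S.Adj u v → S.Adj u w →
      |(A.F t u v : ℝ) - (A.F t u w : ℝ)| ≤ δ)

/-- Maximum load at time `t`. -/
def maxLoad {S : LBSetup V} [Nonempty V] (A : LBAlgo S) (t : ℕ) : ℕ :=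
  Finset.univ.sup' Finset.univ_nonempty (A.x t)

/-- Minimum load at time `t`. -/
def minLoad {S : LBSetup V} [Nonempty V] (A : LBAlgo S) (t : ℕ) : ℕ :=
  Finset.univ.inf' Finset.univ_nonempty (A.x t)

/-- Discrepancy at time `t`. -/
def disc {S : LBSetup V} [Nonempty V] (A : LBAlgo S) (t : ℕ) : ℕ :=
  maxLoad A t - minLoad A t

/-- Transition matrix `P` of the balancing graph `G⁺`. -/
noncomputable def LBSetup.P (S : LBSetup V) : Matrix V V ℝ :=
  Matrix.of fun u v =>
    if S.Adj u v then (1 : ℝ) / S.dPlus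
    else if u = v then (S.dSelf : ℝ) / S.dPlus else 0

/-- `μ` is the eigenvalue gap of `P`: `μ = 1 - λ₂` where `λ₂` is the
largest eigenvalue of `P` different from `1`. -/
def LBSetup.IsEigGap (S : LBSetup V) (μ : ℝ) : Prop :=
  ∃ lam : ℝ, μ = 1 - lam ∧ lam ∈ spectrum ℝ S.P ∧ lam ≠ 1 ∧
    ∀ x ∈ spectrum ℝ S.P, x ≠ 1 → x ≤ lam

/-- Ceiling division `⌈a / b⌉` on naturals. -/
def cdiv (a b : ℕ) : ℕ := (a + b - 1) / b

/-- A good `s`-balancer: a cumulatively 1-fair balancer which is round-fair (every edge,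
including self-loops, carries `⌊x_t(u)/d⁺⌋` or `⌈x_t(u)/d⁺⌉` tokens) and `s`-self-preferring
(at least `min{s, e(u)}` self-loops carry `⌈x_t(u)/d⁺⌉` tokens, where
`e(u) = x_t(u) - d⁺·⌊x_t(u)/d⁺⌋`). -/
def GoodSBalancer (S : LBSetup V) (A : LBAlgo S) (s : ℕ) : Prop :=
  CumFair S A 1 ∧
  ∀ t, 1 ≤ t → ∀ u : V,
    (∀ v : V, S.Adj u v →
        A.f t u v = A.x t u / S.dPlus ∨ A.f t u v = cdiv (A.x t u) S.dPlus) ∧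
    (∀ i : Fin S.dSelf,
        A.g t u i = A.x t u / S.dPlus ∨ A.g t u i = cdiv (A.x t u) S.dPlus) ∧
    min s (A.x t u % S.dPlus) ≤
      (Finset.univ.filter fun i : Fin S.dSelf =>
        A.g t u i = cdiv (A.x t u) S.dPlus).card

/-- The potential `φ_t(c) = Σ_v max{x_t(v) − c·d⁺, 0}`. -/
def phi {S : LBSetup V} (A : LBAlgo S) (t : ℕ) (c : ℕ) : ℤ :=
  ∑ v : V, max ((A.x t v : ℤ) - (c : ℤ) * S.dPlus) 0

/-- The potential `φ'_t(c) = Σ_v max{c·d⁺ + s − x_t(v), 0}`. -/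
def phi' {S : LBSetup V} (A : LBAlgo S) (s : ℕ) (t : ℕ) (c : ℕ) : ℤ :=
  ∑ v : V, max ((c : ℤ) * S.dPlus + (s : ℤ) - (A.x t v : ℤ)) 0

section Obs2Aux

lemma cdiv_spec' (a b : ℕ) (hb : 0 < b) :
    cdiv a b = if a % b = 0 then a / b else a / b + 1 := by
  have h0 := Nat.div_add_mod a b
  have hm := Nat.mod_lt a hb
  by_cases h : a % b = 0
  · simp only [h, if_pos]
    have ha : a + b - 1 = b * (a / b) + (b - 1) := by
      generalize b * (a / b) = m at h0 ⊢; omega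
    rw [cdiv, ha, Nat.mul_add_div hb, Nat.div_eq_of_lt (show b - 1 < b by omega), add_zero]
  · simp only [h, ite_false]
    have ha : a + b - 1 = b * (a / b + 1) + (a % b - 1) := by
      have hb' : b * (a / b + 1) = b * (a / b) + b := by ring
      generalize b * (a / b) = m at h0 hb'; omega
    rw [cdiv, ha, Nat.mul_add_div hb, Nat.div_eq_of_lt (show a % b - 1 < b by omega), add_zero]

variable {S : LBSetup V} {A : LBAlgo S} {s : ℕ}

lemma obs2_sum_theta (c : ℕ) (Θu : Finset (Fin S.dSelf)) (hcard : Θu.card = s) :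
    ∑ i : Fin S.dSelf, (if i ∈ Θu then ((c : ℤ) + 1) else (c : ℤ))
      = (c : ℤ) * S.dSelf + s := by
  have h : ∀ i : Fin S.dSelf, (if i ∈ Θu then ((c : ℤ) + 1) else (c : ℤ))
      = (c : ℤ) + (if i ∈ Θu then (1 : ℤ) else 0) := by intro i; split <;> ring
  rw [Finset.sum_congr rfl fun i _ => h i, Finset.sum_add_distrib,
    Finset.sum_ite_mem, Finset.univ_inter, Finset.sum_const, Finset.sum_const, hcard,
    Finset.card_univ, Fintype.card_fin]
  push_cast [nsmul_eq_mul]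
  ring

lemma obs2_out (hs1 : 1 ≤ s) (hs2 : s ≤ S.dSelf) (hA : GoodSBalancer S A s) (c τ : ℕ)
    (hτ : 1 ≤ τ) (u : V) (Θu : Finset (Fin S.dSelf)) (hcard : Θu.card = s)
    (hmin : min s ((Finset.univ.filter fun i : Fin S.dSelf =>
        A.g τ u i = cdiv (A.x τ u) S.dPlus).card)
      ≤ (Θu ∩ (Finset.univ.filter fun i : Fin S.dSelf =>
        A.g τ u i = cdiv (A.x τ u) S.dPlus)).card) :
    (∑ v ∈ S.nbrs u, max ((c : ℤ) - A.f τ u v) 0)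
      + (∑ i : Fin S.dSelf, max ((if i ∈ Θu then ((c : ℤ) + 1) else (c : ℤ)) - A.g τ u i) 0)
      ≤ max ((c : ℤ) * S.dPlus + s - A.x τ u) 0 := by
  classical
  have hdSelf : 1 ≤ S.dSelf := hs1.trans hs2
  have hdP : 0 < S.dPlus := by unfold LBSetup.dPlus; omega
  set x := A.x τ u with hxdef
  set q := x / S.dPlus with hqdef
  set r := x % S.dPlus with hrdef
  have hdm : S.dPlus * q + r = x := Nat.div_add_mod x S.dPlus
  have hrlt : r < S.dPlus := Nat.mod_lt _ hdP
  have hcd : cdiv x S.dPlus = if r = 0 then q else q + 1 := cdiv_spec' x S.dPlus hdP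
  have hcub : cdiv x S.dPlus ≤ q + 1 := by rw [hcd]; split <;> omega
  have hclb : q ≤ cdiv x S.dPlus := by rw [hcd]; split <;> omega
  obtain ⟨hf, hg, hC⟩ := hA.2 τ hτ u
  rw [← hxdef] at hf hg hC
  rw [← hrdef] at hC
  have hfm : ∀ v ∈ S.nbrs u, A.f τ u v = q ∨ A.f τ u v = cdiv x S.dPlus := by
    intro v hv
    exact hf v (by simpa [LBSetup.nbrs] using hv)
  have hxsum : (x : ℤ) = (∑ v ∈ S.nbrs u, (A.f τ u v : ℤ)) + ∑ i : Fin S.dSelf, (A.g τ u i : ℤ) := by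
    exact_mod_cast congrArg (Nat.cast (R := ℤ)) (A.flow_out τ hτ u)
  have hcardn : (S.nbrs u).card = S.d := S.regular u
  have hdpc : (c : ℤ) * S.dPlus = (c : ℤ) * S.d + (c : ℤ) * S.dSelf := by
    unfold LBSetup.dPlus; push_cast; ring
  rcases lt_trichotomy q c with hqc | hqc | hqc
  · -- q < c : all flows ≤ c ≤ both thresholds
    have hub : ∀ e : ℕ, (e = q ∨ e = cdiv x S.dPlus) → e ≤ c := by
      intro e he; rcases he with rfl | rfl <;> omega
    have e1 : (∑ v ∈ S.nbrs u, max ((c : ℤ) - A.f τ u v) 0)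
        = ∑ v ∈ S.nbrs u, ((c : ℤ) - A.f τ u v) := by
      refine Finset.sum_congr rfl fun v hv => max_eq_left ?_
      have h1 : (A.f τ u v : ℤ) ≤ c := by exact_mod_cast hub _ (hfm v hv)
      omega
    have e2 : (∑ i : Fin S.dSelf, max ((if i ∈ Θu then ((c : ℤ) + 1) else (c : ℤ)) - A.g τ u i) 0)
        = ∑ i : Fin S.dSelf, ((if i ∈ Θu then ((c : ℤ) + 1) else (c : ℤ)) - A.g τ u i) := by
      refine Finset.sum_congr rfl fun i _ => max_eq_left ?_
      have h1 : (A.g τ u i : ℤ) ≤ c := by exact_mod_cast hub _ (hg i)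
      split <;> omega
    rw [e1, e2, Finset.sum_sub_distrib, Finset.sum_sub_distrib, Finset.sum_const, hcardn,
      obs2_sum_theta (s := s) c Θu hcard, nsmul_eq_mul]
    refine le_trans (le_of_eq ?_) (le_max_left _ _)
    linarith [hxsum, hdpc]
  · -- q = c
    have horig : (∑ v ∈ S.nbrs u, max ((c : ℤ) - A.f τ u v) 0) = 0 := by
      refine Finset.sum_eq_zero fun v hv => max_eq_right ?_
      have h1 : c ≤ A.f τ u v := by
        rcases hfm v hv with h | h <;> omega
      have h1' : (c : ℤ) ≤ A.f τ u v := by exact_mod_cast h1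
      omega
    rw [horig, zero_add]
    have hxr : (x : ℤ) = (c : ℤ) * S.dPlus + r := by
      have : (S.dPlus : ℤ) * q + r = x := by exact_mod_cast hdm
      rw [hqc] at this; linarith
    by_cases hr : r = 0
    · -- all self-loops carry exactly c
      have hgval : ∀ i : Fin S.dSelf, A.g τ u i = c := by
        intro i; rcases hg i with h | h
        · omega
        · rw [hcd, if_pos hr] at h; omega
      have hb1 : (∑ i : Fin S.dSelf, max ((if i ∈ Θu then ((c : ℤ) + 1) else (c : ℤ)) - A.g τ u i) 0)
          ≤ ∑ i : Fin S.dSelf, (if i ∈ Θu then (1 : ℤ) else 0) := by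
        refine Finset.sum_le_sum fun i _ => ?_
        rw [hgval i]
        split <;> simp
      have hb2 : (∑ i : Fin S.dSelf, if i ∈ Θu then (1 : ℤ) else 0) = s := by
        rw [Finset.sum_ite_mem, Finset.univ_inter, Finset.sum_const, hcard, nsmul_eq_mul, mul_one]
      have hmx : ((s : ℤ)) ≤ max ((c : ℤ) * S.dPlus + s - x) 0 := by
        rw [hxr, hr]
        push_cast
        omega
      linarith
    · -- r ≠ 0, ceiling is c+1
      have hcd' : cdiv x S.dPlus = c + 1 := by rw [hcd, if_neg hr]; omega
      set Cu : Finset (Fin S.dSelf) := Finset.univ.filter fun i : Fin S.dSelf =>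
        A.g τ u i = cdiv x S.dPlus with hCu
      have hb1 : (∑ i : Fin S.dSelf, max ((if i ∈ Θu then ((c : ℤ) + 1) else (c : ℤ)) - A.g τ u i) 0)
          ≤ ∑ i : Fin S.dSelf, (if i ∈ Θu \ Cu then (1 : ℤ) else 0) := by
        refine Finset.sum_le_sum fun i _ => ?_
        have hglb : c ≤ A.g τ u i := by rcases hg i with h | h <;> omega
        have hglb' : (c : ℤ) ≤ A.g τ u i := by exact_mod_cast hglb
        by_cases hiT : i ∈ Θu
        · by_cases hiC : i ∈ Cu
          · have hgi : A.g τ u i = c + 1 := by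
              have := (Finset.mem_filter.mp hiC).2
              rw [hcd'] at this
              exact this
            have hgi' : (A.g τ u i : ℤ) = (c : ℤ) + 1 := by exact_mod_cast hgi
            rw [if_pos hiT, if_neg (by simp [Finset.mem_sdiff, hiT, hiC]), hgi']
            simp
          · rw [if_pos hiT, if_pos (Finset.mem_sdiff.mpr ⟨hiT, hiC⟩)]
            omega
        · rw [if_neg hiT, if_neg (by simp [Finset.mem_sdiff, hiT])]
          omega
      have hb2 : (∑ i : Fin S.dSelf, if i ∈ Θu \ Cu then (1 : ℤ) else 0) = ((Θu \ Cu).card : ℤ) := by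
        rw [Finset.sum_ite_mem, Finset.univ_inter, Finset.sum_const, nsmul_eq_mul, mul_one]
      have hcards := Finset.card_inter_add_card_sdiff Θu Cu
      have hCr : min s r ≤ Cu.card := hC
      have hsd : (Θu \ Cu).card ≤ s - min s r := by omega
      have hxe : (c : ℤ) * S.dPlus + s - x = (s : ℤ) - r := by rw [hxr]; ring
      have hmx : max ((c : ℤ) * S.dPlus + s - x) 0 = (s : ℤ) - ((min s r : ℕ) : ℤ) := by
        rw [hxe]; omega
      have hfin : (((Θu \ Cu).card : ℕ) : ℤ) ≤ (s : ℤ) - ((min s r : ℕ) : ℤ) := by omega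
      rw [hmx]
      linarith [hb1, hb2.le, hfin]
  · -- c < q : every term is zero
    have h1 : (∑ v ∈ S.nbrs u, max ((c : ℤ) - A.f τ u v) 0) = 0 := by
      refine Finset.sum_eq_zero fun v hv => max_eq_right ?_
      have h1 : q ≤ A.f τ u v := by rcases hfm v hv with h | h <;> omega
      have h1' : (q : ℤ) ≤ A.f τ u v := by exact_mod_cast h1
      have : (c : ℤ) + 1 ≤ q := by exact_mod_cast Nat.succ_le_of_lt hqc
      omega
    have h2 : (∑ i : Fin S.dSelf, max ((if i ∈ Θu then ((c : ℤ) + 1) else (c : ℤ)) - A.g τ u i) 0) = 0 := by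
      refine Finset.sum_eq_zero fun i _ => max_eq_right ?_
      have h1 : q ≤ A.g τ u i := by rcases hg i with h | h <;> omega
      have h1' : (q : ℤ) ≤ A.g τ u i := by exact_mod_cast h1
      have : (c : ℤ) + 1 ≤ q := by exact_mod_cast Nat.succ_le_of_lt hqc
      split <;> omega
    rw [h1, h2]
    simpa using le_max_right ((c : ℤ) * S.dPlus + s - (x:ℤ)) 0

lemma obs2_in0 (hs1 : 1 ≤ s) (hs2 : s ≤ S.dSelf) (hA : GoodSBalancer S A s) (c τ : ℕ)
    (hτ : 1 ≤ τ) (u : V) (Θu : Finset (Fin S.dSelf)) (hcard : Θu.card = s) :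
    max ((c : ℤ) * S.dPlus + s - A.x (τ + 1) u) 0
      ≤ (∑ v ∈ S.nbrs u, max ((c : ℤ) - A.f τ v u) 0)
        + ∑ i : Fin S.dSelf, max ((if i ∈ Θu then ((c : ℤ) + 1) else (c : ℤ)) - A.g τ u i) 0 := by
  have hdSelf : 1 ≤ S.dSelf := hs1.trans hs2
  have hysum : ((A.x (τ + 1) u : ℤ))
      = (∑ v ∈ S.nbrs u, (A.f τ v u : ℤ)) + ∑ i : Fin S.dSelf, (A.g τ u i : ℤ) := by
    exact_mod_cast congrArg (Nat.cast (R := ℤ)) (A.flow_in τ hτ u)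
  have hcardn : (S.nbrs u).card = S.d := S.regular u
  have hdpc : (c : ℤ) * S.dPlus = (c : ℤ) * S.d + (c : ℤ) * S.dSelf := by
    unfold LBSetup.dPlus; push_cast; ring
  apply max_le
  · have h1 : (∑ v ∈ S.nbrs u, ((c : ℤ) - A.f τ v u))
        ≤ ∑ v ∈ S.nbrs u, max ((c : ℤ) - A.f τ v u) 0 :=
      Finset.sum_le_sum fun v _ => le_max_left _ _
    have h2 : (∑ i : Fin S.dSelf, ((if i ∈ Θu then ((c : ℤ) + 1) else (c : ℤ)) - A.g τ u i))
        ≤ ∑ i : Fin S.dSelf, max ((if i ∈ Θu then ((c : ℤ) + 1) else (c : ℤ)) - A.g τ u i) 0 :=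
      Finset.sum_le_sum fun i _ => le_max_left _ _
    rw [Finset.sum_sub_distrib, Finset.sum_const, hcardn, nsmul_eq_mul] at h1
    rw [Finset.sum_sub_distrib, obs2_sum_theta (s := s) c Θu hcard] at h2
    linarith
  · have h1 : (0 : ℤ) ≤ ∑ v ∈ S.nbrs u, max ((c : ℤ) - A.f τ v u) 0 :=
      Finset.sum_nonneg fun v _ => le_max_right _ _
    have h2 : (0 : ℤ) ≤ ∑ i : Fin S.dSelf, max ((if i ∈ Θu then ((c : ℤ) + 1) else (c : ℤ)) - A.g τ u i) 0 :=
      Finset.sum_nonneg fun i _ => le_max_right _ _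
    linarith

set_option maxHeartbeats 1000000 in
lemma obs2_in1 (hs1 : 1 ≤ s) (hs2 : s ≤ S.dSelf) (hA : GoodSBalancer S A s) (c τ : ℕ)
    (hτ : 1 ≤ τ) (u : V) (Θu : Finset (Fin S.dSelf)) (hcard : Θu.card = s)
    (hxW : (A.x τ u : ℤ) < (c : ℤ) * S.dPlus + s) :
    max ((c : ℤ) * S.dPlus + s - A.x (τ + 1) u) 0
      + (min (s : ℤ) (max ((c : ℤ) * S.dPlus + s - A.x τ u) 0)
          - min (s : ℤ) (max ((c : ℤ) * S.dPlus + s - A.x (τ + 1) u) 0))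
      ≤ (∑ v ∈ S.nbrs u, max ((c : ℤ) - A.f τ v u) 0)
        + ∑ i : Fin S.dSelf, max ((if i ∈ Θu then ((c : ℤ) + 1) else (c : ℤ)) - A.g τ u i) 0 := by
  classical
  have hdSelf : 1 ≤ S.dSelf := hs1.trans hs2
  have hdP : 0 < S.dPlus := by unfold LBSetup.dPlus; omega
  have hsdP : s ≤ S.dPlus := by unfold LBSetup.dPlus at *; omega
  have hin0 := obs2_in0 hs1 hs2 hA c τ hτ u Θu hcard
  set x := A.x τ u with hxdef
  set q := x / S.dPlus with hqdef
  set r := x % S.dPlus with hrdef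
  have hdm : S.dPlus * q + r = x := Nat.div_add_mod x S.dPlus
  have hrlt : r < S.dPlus := Nat.mod_lt _ hdP
  have hcd : cdiv x S.dPlus = if r = 0 then q else q + 1 := cdiv_spec' x S.dPlus hdP
  have hcub : cdiv x S.dPlus ≤ q + 1 := by rw [hcd]; split <;> omega
  have hclb : q ≤ cdiv x S.dPlus := by rw [hcd]; split <;> omega
  obtain ⟨hf, hg, hC⟩ := hA.2 τ hτ u
  rw [← hxdef] at hf hg hC
  rw [← hrdef] at hC
  have hfm : ∀ v ∈ S.nbrs u, A.f τ u v = q ∨ A.f τ u v = cdiv x S.dPlus := by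
    intro v hv
    exact hf v (by simpa [LBSetup.nbrs] using hv)
  have hxsum : (x : ℤ) = (∑ v ∈ S.nbrs u, (A.f τ u v : ℤ)) + ∑ i : Fin S.dSelf, (A.g τ u i : ℤ) := by
    exact_mod_cast congrArg (Nat.cast (R := ℤ)) (A.flow_out τ hτ u)
  have hcardn : (S.nbrs u).card = S.d := S.regular u
  have hdpc : (c : ℤ) * S.dPlus = (c : ℤ) * S.d + (c : ℤ) * S.dSelf := by
    unfold LBSetup.dPlus; push_cast; ring
  have horig0 : (0 : ℤ) ≤ ∑ v ∈ S.nbrs u, max ((c : ℤ) - A.f τ v u) 0 :=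
    Finset.sum_nonneg fun v _ => le_max_right _ _
  -- q ≤ c
  have hqlec : q ≤ c := by
    by_contra hcon
    push_neg at hcon
    have h1 : S.dPlus * (c + 1) ≤ S.dPlus * q := Nat.mul_le_mul_left _ hcon
    have h2 : S.dPlus * (c + 1) ≤ x := by omega
    have h2' : ((S.dPlus * (c + 1) : ℕ) : ℤ) ≤ (x : ℤ) := by exact_mod_cast h2
    push_cast at h2'
    nlinarith [h2', hxW, hsdP]
  set m : ℤ := max ((c : ℤ) * S.dPlus + s - A.x (τ + 1) u) 0 with hm
  have hm0 : 0 ≤ m := le_max_right _ _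
  rcases Nat.lt_or_ge q c with hqc | hqc
  · -- q < c
    have hxltc : x < S.dPlus * c := by
      have h1 : S.dPlus * (q + 1) ≤ S.dPlus * c := Nat.mul_le_mul_left _ hqc
      have h2 : S.dPlus * (q + 1) = S.dPlus * q + S.dPlus := by ring
      omega
    have hxltc' : (x : ℤ) < (c : ℤ) * S.dPlus := by
      have := (Nat.cast_lt (α := ℤ)).mpr hxltc
      push_cast at this
      linarith
    have hmins : min (s : ℤ) (max ((c : ℤ) * S.dPlus + s - x) 0) = s := by
      have h1 : (s : ℤ) ≤ (c : ℤ) * S.dPlus + s - x := by linarith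
      have h2 : (s : ℤ) ≤ max ((c : ℤ) * S.dPlus + s - x) 0 := le_trans h1 (le_max_left _ _)
      omega
    have hIs : (s : ℤ) ≤ (∑ v ∈ S.nbrs u, max ((c : ℤ) - A.f τ v u) 0)
        + ∑ i : Fin S.dSelf, max ((if i ∈ Θu then ((c : ℤ) + 1) else (c : ℤ)) - A.g τ u i) 0 := by
      have hgsum : (∑ i : Fin S.dSelf, (A.g τ u i : ℤ)) ≤ (S.dSelf : ℤ) * ((q : ℤ) + 1) := by
        calc (∑ i : Fin S.dSelf, (A.g τ u i : ℤ))
            ≤ ∑ _i : Fin S.dSelf, ((q : ℤ) + 1) := by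
              refine Finset.sum_le_sum fun i _ => ?_
              have : A.g τ u i ≤ q + 1 := by rcases hg i with h | h <;> omega
              exact_mod_cast this
          _ = (S.dSelf : ℤ) * ((q : ℤ) + 1) := by
              rw [Finset.sum_const, Finset.card_univ, Fintype.card_fin, nsmul_eq_mul]
      have hq1c : ((q : ℤ) + 1) ≤ (c : ℤ) := by exact_mod_cast Nat.succ_le_of_lt hqc
      have hgc : (∑ i : Fin S.dSelf, (A.g τ u i : ℤ)) ≤ (c : ℤ) * S.dSelf := by
        have h := mul_le_mul_of_nonneg_left hq1c (by positivity : (0:ℤ) ≤ (S.dSelf : ℤ))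
        linarith [hgsum]
      have hself : ((c : ℤ) * S.dSelf + s) - (∑ i : Fin S.dSelf, (A.g τ u i : ℤ))
          ≤ ∑ i : Fin S.dSelf, max ((if i ∈ Θu then ((c : ℤ) + 1) else (c : ℤ)) - A.g τ u i) 0 := by
        have := Finset.sum_le_sum (s := (Finset.univ : Finset (Fin S.dSelf)))
          (f := fun i => ((if i ∈ Θu then ((c : ℤ) + 1) else (c : ℤ)) - A.g τ u i))
          (g := fun i => max ((if i ∈ Θu then ((c : ℤ) + 1) else (c : ℤ)) - A.g τ u i) 0)
          (fun i _ => le_max_left _ _)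
        rw [Finset.sum_sub_distrib, obs2_sum_theta (s := s) c Θu hcard] at this
        linarith
      linarith
    rw [hmins]
    rcases le_total (s : ℤ) m with hsm | hsm
    · rw [min_eq_left hsm]; linarith
    · rw [min_eq_right hsm]; linarith
  · -- q = c
    have hqc' : q = c := le_antisymm hqlec hqc
    have hxr : (x : ℤ) = (c : ℤ) * S.dPlus + r := by
      have : ((S.dPlus * q + r : ℕ) : ℤ) = (x : ℤ) := by exact_mod_cast hdm
      push_cast at this
      rw [hqc'] at this
      linarith
    have hrs : r < s := by
      by_contra hcon
      push_neg at hcon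
      have : (s : ℤ) ≤ (r : ℤ) := by exact_mod_cast hcon
      linarith [hxW, hxr]
    have hmins : min (s : ℤ) (max ((c : ℤ) * S.dPlus + s - x) 0) = (s : ℤ) - r := by
      have h1 : (c : ℤ) * S.dPlus + s - x = (s : ℤ) - r := by rw [hxr]; ring
      rw [h1]
      have : (0 : ℤ) ≤ (s : ℤ) - r := by
        have : (r : ℤ) < s := by exact_mod_cast hrs
        linarith
      omega
    -- K = self loops carrying c+1
    set K : Finset (Fin S.dSelf) := Finset.univ.filter fun i : Fin S.dSelf =>
      A.g τ u i = c + 1 with hK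
    have hgK : ∀ i : Fin S.dSelf, ((c : ℤ) + (if i ∈ K then (1 : ℤ) else 0)) ≤ A.g τ u i ∧
        (A.g τ u i : ℤ) ≤ (c : ℤ) + (if i ∈ K then (1 : ℤ) else 0) := by
      intro i
      have hmem : i ∈ K ↔ A.g τ u i = c + 1 := by simp [hK]
      have hgi : A.g τ u i = c ∨ A.g τ u i = c + 1 := by
        rcases hg i with h | h
        · left; omega
        · rw [hcd] at h
          split at h <;> omega
      by_cases hiK : i ∈ K
      · have := hmem.mp hiK
        rw [if_pos hiK, this]
        constructor <;> push_cast <;> omega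
      · have hne : A.g τ u i ≠ c + 1 := fun hh => hiK (hmem.mpr hh)
        have hceq : A.g τ u i = c := by
          rcases hgi with h | h
          · exact h
          · exact absurd h hne
        rw [if_neg hiK, hceq]
        constructor <;> push_cast <;> omega
    have hKsum : (∑ i : Fin S.dSelf, (if i ∈ K then (1 : ℤ) else 0)) = (K.card : ℤ) := by
      rw [Finset.sum_ite_mem, Finset.univ_inter, Finset.sum_const, nsmul_eq_mul, mul_one]
    have hKr : (K.card : ℤ) ≤ r := by
      have hfl : (∑ v ∈ S.nbrs u, ((c : ℤ))) ≤ ∑ v ∈ S.nbrs u, (A.f τ u v : ℤ) := by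
        refine Finset.sum_le_sum fun v hv => ?_
        have : c ≤ A.f τ u v := by rcases hfm v hv with h | h <;> omega
        exact_mod_cast this
      rw [Finset.sum_const, hcardn, nsmul_eq_mul] at hfl
      have hgl : (∑ i : Fin S.dSelf, ((c : ℤ) + (if i ∈ K then (1 : ℤ) else 0)))
          ≤ ∑ i : Fin S.dSelf, (A.g τ u i : ℤ) :=
        Finset.sum_le_sum fun i _ => (hgK i).1
      rw [Finset.sum_add_distrib, hKsum, Finset.sum_const, Finset.card_univ,
        Fintype.card_fin, nsmul_eq_mul] at hgl
      have := hxsum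
      rw [hxr] at this
      linarith [hdpc]
    have hIsr : (s : ℤ) - r ≤ (∑ v ∈ S.nbrs u, max ((c : ℤ) - A.f τ v u) 0)
        + ∑ i : Fin S.dSelf, max ((if i ∈ Θu then ((c : ℤ) + 1) else (c : ℤ)) - A.g τ u i) 0 := by
      have hsub : (∑ i ∈ Θu, max (((c : ℤ) + 1) - A.g τ u i) 0)
          ≤ ∑ i : Fin S.dSelf, max ((if i ∈ Θu then ((c : ℤ) + 1) else (c : ℤ)) - A.g τ u i) 0 := by
        calc (∑ i ∈ Θu, max (((c : ℤ) + 1) - A.g τ u i) 0)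
            = ∑ i ∈ Θu, max ((if i ∈ Θu then ((c : ℤ) + 1) else (c : ℤ)) - A.g τ u i) 0 :=
              Finset.sum_congr rfl fun i hi => by rw [if_pos hi]
          _ ≤ _ := Finset.sum_le_sum_of_subset_of_nonneg (Finset.subset_univ Θu)
              (fun i _ _ => le_max_right _ _)
      have hval : (∑ i ∈ Θu, (((c : ℤ) + 1) - A.g τ u i))
          ≤ ∑ i ∈ Θu, max (((c : ℤ) + 1) - A.g τ u i) 0 :=
        Finset.sum_le_sum fun i _ => le_max_left _ _
      have hgub : (∑ i ∈ Θu, (A.g τ u i : ℤ))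
          ≤ ∑ i ∈ Θu, ((c : ℤ) + (if i ∈ K then (1 : ℤ) else 0)) :=
        Finset.sum_le_sum fun i _ => (hgK i).2
      have hiteK : (∑ i ∈ Θu, (if i ∈ K then (1 : ℤ) else 0)) ≤ (K.card : ℤ) := by
        rw [Finset.sum_ite_mem]
        calc (∑ i ∈ Θu ∩ K, (1 : ℤ)) = ((Θu ∩ K).card : ℤ) := by
              rw [Finset.sum_const, nsmul_eq_mul, mul_one]
          _ ≤ (K.card : ℤ) := by
              exact_mod_cast Finset.card_le_card (Finset.inter_subset_right)
      have e1 : (∑ i ∈ Θu, (((c : ℤ) + 1) - A.g τ u i))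
          = (s : ℤ) * ((c : ℤ) + 1) - ∑ i ∈ Θu, (A.g τ u i : ℤ) := by
        rw [Finset.sum_sub_distrib, Finset.sum_const, hcard, nsmul_eq_mul]
      have e2 : (∑ i ∈ Θu, ((c : ℤ) + (if i ∈ K then (1 : ℤ) else 0)))
          = (s : ℤ) * c + ∑ i ∈ Θu, (if i ∈ K then (1 : ℤ) else 0) := by
        rw [Finset.sum_add_distrib, Finset.sum_const, hcard, nsmul_eq_mul]
      have e3 : (∑ i ∈ Θu, ((c : ℤ) + (if i ∈ K then (1 : ℤ) else 0)))
          ≤ (s : ℤ) * (c : ℤ) + (K.card : ℤ) := by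
        rw [e2]; linarith [hiteK]
      have e5 : (∑ i ∈ Θu, (A.g τ u i : ℤ)) ≤ (s : ℤ) * (c : ℤ) + (K.card : ℤ) :=
        le_trans hgub e3
      have hring : (s : ℤ) * ((c : ℤ) + 1) = (s : ℤ) * (c : ℤ) + s := by ring
      have e4 : (s : ℤ) - (K.card : ℤ) ≤ ∑ i ∈ Θu, (((c : ℤ) + 1) - A.g τ u i) := by
        rw [e1]; linarith
      linarith [hsub, hval, horig0, hKr, e4]
    rw [hmins]
    have hr0 : (0 : ℤ) ≤ (r : ℤ) := by omega
    rcases le_total (s : ℤ) m with hsm | hsm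
    · rw [min_eq_left hsm]; linarith
    · rw [min_eq_right hsm]; linarith

set_option maxHeartbeats 1000000 in
lemma obs2_step (hs1 : 1 ≤ s) (hs2 : s ≤ S.dSelf) (hA : GoodSBalancer S A s) (c τ : ℕ)
    (hτ : 1 ≤ τ) (W : Finset V)
    (hW : ∀ u ∈ W, (A.x τ u : ℤ) < (c : ℤ) * S.dPlus + s) :
    (∑ v : V, max ((c : ℤ) * S.dPlus + s - A.x (τ + 1) v) 0)
      + ∑ u ∈ W, (min (s : ℤ) (max ((c : ℤ) * S.dPlus + s - A.x τ u) 0)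
          - min (s : ℤ) (max ((c : ℤ) * S.dPlus + s - A.x (τ + 1) u) 0))
      ≤ ∑ v : V, max ((c : ℤ) * S.dPlus + s - A.x τ v) 0 := by
  classical
  have hdSelf : 1 ≤ S.dSelf := hs1.trans hs2
  -- choose the marked self-loops for each node
  have hΘex : ∀ u : V, ∃ Θu : Finset (Fin S.dSelf), Θu.card = s ∧
      min s ((Finset.univ.filter fun i : Fin S.dSelf =>
        A.g τ u i = cdiv (A.x τ u) S.dPlus).card)
      ≤ (Θu ∩ (Finset.univ.filter fun i : Fin S.dSelf =>
        A.g τ u i = cdiv (A.x τ u) S.dPlus)).card := by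
    intro u
    set Cu := Finset.univ.filter fun i : Fin S.dSelf =>
      A.g τ u i = cdiv (A.x τ u) S.dPlus with hCu
    obtain ⟨C', hC'sub, hC'card⟩ := Finset.exists_subset_card_eq (s := Cu) (n := min s Cu.card) (min_le_right _ _)
    obtain ⟨Θu, hΘsub, hΘcard⟩ := Finset.exists_superset_card_eq
      (s := C') (n := s) (by rw [hC'card]; exact min_le_left _ _)
      (by rw [Fintype.card_fin]; omega)
    refine ⟨Θu, hΘcard, ?_⟩
    calc min s Cu.card = C'.card := hC'card.symm
      _ ≤ (Θu ∩ Cu).card := Finset.card_le_card (Finset.subset_inter hΘsub hC'sub)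
  choose Θ hΘcard hΘmin using hΘex
  -- the exchange identity for original edges
  have hAdj : ∀ a b : V, S.Adj a b = S.Adj b a := by
    intro a b
    cases hab : S.Adj a b <;> cases hba : S.Adj b a
    · rfl
    · exact absurd (S.symm b a hba) (by simp [hab])
    · exact absurd (S.symm a b hab) (by simp [hba])
    · rfl
  have hswap : (∑ u : V, ∑ v ∈ S.nbrs u, max ((c : ℤ) - A.f τ v u) 0)
      = ∑ u : V, ∑ v ∈ S.nbrs u, max ((c : ℤ) - A.f τ u v) 0 := by
    calc (∑ u : V, ∑ v ∈ S.nbrs u, max ((c : ℤ) - A.f τ v u) 0)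
        = ∑ u : V, ∑ v : V, if S.Adj u v then max ((c : ℤ) - A.f τ v u) 0 else 0 := by
          refine Finset.sum_congr rfl fun u _ => ?_
          rw [LBSetup.nbrs, Finset.sum_filter]
      _ = ∑ v : V, ∑ u : V, if S.Adj u v then max ((c : ℤ) - A.f τ v u) 0 else 0 :=
          Finset.sum_comm
      _ = ∑ v : V, ∑ u : V, if S.Adj v u then max ((c : ℤ) - A.f τ v u) 0 else 0 := by
          refine Finset.sum_congr rfl fun v _ => Finset.sum_congr rfl fun u _ => ?_
          rw [hAdj v u]
      _ = ∑ u : V, ∑ v ∈ S.nbrs u, max ((c : ℤ) - A.f τ u v) 0 := by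
          refine Finset.sum_congr rfl fun v _ => ?_
          rw [LBSetup.nbrs, Finset.sum_filter]
  -- per-node bounds
  have hout : ∀ u : V,
      ((∑ v ∈ S.nbrs u, max ((c : ℤ) - A.f τ u v) 0)
        + ∑ i : Fin S.dSelf, max ((if i ∈ Θ u then ((c : ℤ) + 1) else (c : ℤ)) - A.g τ u i) 0)
      ≤ max ((c : ℤ) * S.dPlus + s - A.x τ u) 0 :=
    fun u => obs2_out hs1 hs2 hA c τ hτ u (Θ u) (hΘcard u) (hΘmin u)
  have hmid : (∑ v : V, max ((c : ℤ) * S.dPlus + s - A.x (τ + 1) v) 0)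
      + ∑ u ∈ W, (min (s : ℤ) (max ((c : ℤ) * S.dPlus + s - A.x τ u) 0)
          - min (s : ℤ) (max ((c : ℤ) * S.dPlus + s - A.x (τ + 1) u) 0))
      ≤ ∑ u : V, ((∑ v ∈ S.nbrs u, max ((c : ℤ) - A.f τ v u) 0)
        + ∑ i : Fin S.dSelf, max ((if i ∈ Θ u then ((c : ℤ) + 1) else (c : ℤ)) - A.g τ u i) 0) := by
    have h1 : (∑ u ∈ W, (min (s : ℤ) (max ((c : ℤ) * S.dPlus + s - A.x τ u) 0)
          - min (s : ℤ) (max ((c : ℤ) * S.dPlus + s - A.x (τ + 1) u) 0)))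
        = ∑ u : V, (if u ∈ W then (min (s : ℤ) (max ((c : ℤ) * S.dPlus + s - A.x τ u) 0)
          - min (s : ℤ) (max ((c : ℤ) * S.dPlus + s - A.x (τ + 1) u) 0)) else 0) := by
      rw [Finset.sum_ite_mem, Finset.univ_inter]
    rw [h1, ← Finset.sum_add_distrib]
    refine Finset.sum_le_sum fun u _ => ?_
    by_cases huW : u ∈ W
    · rw [if_pos huW]
      exact obs2_in1 hs1 hs2 hA c τ hτ u (Θ u) (hΘcard u) (hW u huW)
    · rw [if_neg huW, add_zero]
      exact obs2_in0 hs1 hs2 hA c τ hτ u (Θ u) (hΘcard u)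
  refine le_trans hmid (le_trans (le_of_eq ?_) (Finset.sum_le_sum fun u _ => hout u))
  rw [Finset.sum_add_distrib, Finset.sum_add_distrib, hswap]

end Obs2Aux

/-- **Observation 2.** Let `A` be a good `s`-balancer, `t ≤ t'` two time steps, and `U` a
set of nodes each of which has load less than `c·d⁺ + s` at time `t` and load at least
`c·d⁺ + s` at some time `t_u ∈ [t, t']`. Then
`φ'_{t'}(c) ≤ φ'_t(c) − Σ_{u∈U} min{s, c·d⁺ + s − x_t(u)}`. -/
theorem phi'_fast_drop (S : LBSetup V) (A : LBAlgo S) (s : ℕ)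
    (hs1 : 1 ≤ s) (hs2 : s ≤ S.dSelf) (hA : GoodSBalancer S A s) (c : ℕ)
    (t t' : ℕ) (ht : 1 ≤ t) (htt' : t ≤ t') (U : Finset V)
    (hU : ∀ u ∈ U, A.x t u < c * S.dPlus + s ∧
      ∃ tu ∈ Finset.Icc t t', c * S.dPlus + s ≤ A.x tu u) :
    phi' A s t' c ≤ phi' A s t c -
      ∑ u ∈ U, min (s : ℤ) ((c : ℤ) * S.dPlus + (s : ℤ) - (A.x t u : ℤ)) := by
  classical
  set D : ℕ → ℤ := fun τ => ∑ v : V, max ((c : ℤ) * S.dPlus + s - A.x τ v) 0 with hD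
  set M : V → ℤ := fun u => min (s : ℤ) ((c : ℤ) * S.dPlus + s - A.x t u) with hM
  set cr : ℕ → V → Prop := fun τ u => ∃ σ ∈ Finset.Icc t τ, c * S.dPlus + s ≤ A.x σ u with hcr
  set h : ℕ → V → ℤ := fun τ u => if cr τ u then M u
    else M u - min (s : ℤ) (max ((c : ℤ) * S.dPlus + s - A.x τ u) 0) with hh
  have hInv : ∀ τ, t ≤ τ → D τ + ∑ u ∈ U, h τ u ≤ D t := by
    intro τ hτ
    induction τ, hτ using Nat.le_induction with
    | base =>
        have hz : ∀ u ∈ U, h t u = 0 := by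
          intro u hu
          have hxu := (hU u hu).1
          have hncr : ¬ cr t u := by
            rintro ⟨σ, hσ, hσx⟩
            rw [Finset.mem_Icc] at hσ
            have : σ = t := by omega
            subst this
            omega
          have hmax : max ((c : ℤ) * S.dPlus + s - A.x t u) 0
              = (c : ℤ) * S.dPlus + s - A.x t u := by
            apply max_eq_left
            have : (A.x t u : ℤ) < (c : ℤ) * S.dPlus + s := by
              have := hxu
              push_cast
              omega
            linarith
          rw [hh]
          simp only [if_neg hncr, hmax, hM]
          ring
        rw [Finset.sum_congr rfl hz, Finset.sum_const, smul_zero, add_zero]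
    | succ τ hτle ih =>
        set W : Finset V := U.filter (fun u => ¬ cr τ u) with hWdef
        have hWx : ∀ u ∈ W, (A.x τ u : ℤ) < (c : ℤ) * S.dPlus + s := by
          intro u hu
          rw [hWdef, Finset.mem_filter] at hu
          by_contra hcon
          push_neg at hcon
          refine hu.2 ⟨τ, Finset.mem_Icc.mpr ⟨hτle, le_refl τ⟩, ?_⟩
          exact_mod_cast hcon
        have hstep := obs2_step hs1 hs2 hA c τ (le_trans ht hτle) W hWx
        have hHle : ∑ u ∈ U, h (τ + 1) u ≤ (∑ u ∈ U, h τ u)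
            + ∑ u ∈ W, (min (s : ℤ) (max ((c : ℤ) * S.dPlus + s - A.x τ u) 0)
                - min (s : ℤ) (max ((c : ℤ) * S.dPlus + s - A.x (τ + 1) u) 0)) := by
          rw [hWdef, Finset.sum_filter, ← Finset.sum_add_distrib]
          refine Finset.sum_le_sum fun u hu => ?_
          by_cases hcru : cr τ u
          · have hcru' : cr (τ + 1) u := by
              obtain ⟨σ, hσ, hx⟩ := hcru
              rw [Finset.mem_Icc] at hσ
              exact ⟨σ, Finset.mem_Icc.mpr ⟨hσ.1, by omega⟩, hx⟩
            rw [hh]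
            simp only [if_pos hcru, if_pos hcru', if_neg (not_not_intro hcru), add_zero]
            exact le_refl _
          · by_cases hcru' : cr (τ + 1) u
            · have hxL : c * S.dPlus + s ≤ A.x (τ + 1) u := by
                obtain ⟨σ, hσ, hx⟩ := hcru'
                rw [Finset.mem_Icc] at hσ
                rcases Nat.lt_or_ge σ (τ + 1) with hlt | hge
                · exact absurd ⟨σ, Finset.mem_Icc.mpr ⟨hσ.1, by omega⟩, hx⟩ hcru
                · have : σ = τ + 1 := by omega
                  subst this
                  exact hx
              have hmax0 : max ((c : ℤ) * S.dPlus + s - A.x (τ + 1) u) 0 = 0 := by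
                apply max_eq_right
                have : ((c * S.dPlus + s : ℕ) : ℤ) ≤ (A.x (τ + 1) u : ℤ) := by
                  exact_mod_cast hxL
                push_cast at this
                linarith
              rw [hh]
              simp only [if_pos hcru', if_neg hcru, if_pos hcru, hmax0]
              have hmin0 : min (s : ℤ) (0 : ℤ) = 0 := by omega
              rw [hmin0]
              exact le_of_eq (by ring)
            · rw [hh]
              simp only [if_neg hcru, if_neg hcru', if_pos hcru]
              exact le_of_eq (by ring)
        calc D (τ + 1) + ∑ u ∈ U, h (τ + 1) u
            ≤ D (τ + 1) + ((∑ u ∈ U, h τ u)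
              + ∑ u ∈ W, (min (s : ℤ) (max ((c : ℤ) * S.dPlus + s - A.x τ u) 0)
                - min (s : ℤ) (max ((c : ℤ) * S.dPlus + s - A.x (τ + 1) u) 0))) := by
              linarith
          _ ≤ D τ + ∑ u ∈ U, h τ u := by
              rw [hD]
              simp only
              linarith [hstep]
          _ ≤ D t := ih
  have hfinal := hInv t' htt'
  have hcrall : ∀ u ∈ U, h t' u = M u := by
    intro u hu
    obtain ⟨tu, htu, hxtu⟩ := (hU u hu).2
    rw [hh]
    simp only [if_pos (show cr t' u from ⟨tu, htu, hxtu⟩)]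
  rw [Finset.sum_congr rfl hcrall] at hfinal
  have hphi1 : phi' A s t' c = D t' := rfl
  have hphi2 : phi' A s t c = D t := rfl
  have hMsum : (∑ u ∈ U, min (s : ℤ) ((c : ℤ) * S.dPlus + (s : ℤ) - (A.x t u : ℤ)))
      = ∑ u ∈ U, M u := rfl
  rw [hphi1, hphi2, hMsum]
  linarith
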